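/- The direct product of complete multipartite graphs K_{a,…,a} (p₁ parts) and K_{b,…,b} (p₂ parts), where p₁, p₂ are distinct odd primes, has diameter 2. -/

import Mathlib

/-- The unitary Cayley graph of a commutative ring: vertices are ring elements,
with `x ~ y` iff `x ≠ y` and `x - y` is a unit. -/
def unitaryCayley (R : Type*) [CommRing R] : SimpleGraph R where
  Adj x y := x ≠ y ∧ IsUnit (x - y)
  symm := ⟨by
    rintro x y ⟨hne, hu⟩
    exact ⟨hne.symm, by simpa [neg_sub] using hu.neg⟩⟩
  loopless := ⟨by rintro x ⟨h, -⟩; exact h rfl⟩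

/-- A packing `k`-coloring: every vertex gets a color in `{1, …, k}`, and any two
distinct vertices with the same color `i` are at distance greater than `i`
(`edist` equals `⊤` for unreachable pairs, which counts as distance greater than `i`). -/
def SimpleGraph.IsPackingColoring {V : Type*} (G : SimpleGraph V) (k : ℕ) (c : V → ℕ) : Prop :=
  (∀ v, 1 ≤ c v ∧ c v ≤ k) ∧
    ∀ u v, u ≠ v → c u = c v → (c u : ℕ∞) < G.edist u v

/-- The packing chromatic number: the least `k` admitting a packing `k`-coloring. -/
noncomputable def SimpleGraph.packingChromaticNumber {V : Type*} (G : SimpleGraph V) : ℕ :=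
  sInf {k | ∃ c : V → ℕ, G.IsPackingColoring k c}

/-- The independence number: the largest cardinality of a set of pairwise
nonadjacent vertices. -/
noncomputable def SimpleGraph.indepNum' {V : Type*} (G : SimpleGraph V) : ℕ :=
  sSup {n | ∃ s : Finset V, (∀ u ∈ s, ∀ v ∈ s, u ≠ v → ¬ G.Adj u v) ∧ s.card = n}

/-- The tensor (direct, categorical) product of two simple graphs. -/
def tensorProd {V W : Type*} (G : SimpleGraph V) (H : SimpleGraph W) :
    SimpleGraph (V × W) where
  Adj a b := G.Adj a.1 b.1 ∧ H.Adj a.2 b.2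
  symm := ⟨fun _ _ ⟨h1, h2⟩ => ⟨h1.symm, h2.symm⟩⟩
  loopless := ⟨fun a h => G.loopless.irrefl a.1 h.1⟩

/-- The tensor (direct, categorical) product of a family of simple graphs. -/
def tensorPi {ι : Type*} [Nonempty ι] {V : ι → Type*} (G : ∀ i, SimpleGraph (V i)) :
    SimpleGraph (∀ i, V i) where
  Adj a b := ∀ i, (G i).Adj (a i) (b i)
  symm := ⟨fun _ _ h i => (h i).symm⟩
  loopless := ⟨fun a h => (G (Classical.arbitrary ι)).loopless.irrefl _ (h _)⟩

lemma fin_third {n : ℕ} (hn : 3 ≤ n) (x y : Fin n) : ∃ z : Fin n, z ≠ x ∧ z ≠ y := by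
  by_contra h
  push_neg at h
  have hsub : (Finset.univ : Finset (Fin n)) ⊆ {x, y} := by
    intro z _
    rcases eq_or_ne z x with rfl | hz
    · simp
    · simp [h z hz]
  have hc := Finset.card_le_card hsub
  have h2 : ({x, y} : Finset (Fin n)).card ≤ 2 :=
    (Finset.card_insert_le _ _).trans (by simp)
  simp [Finset.card_univ] at hc
  omega


theorem stmt19 (p₁ p₂ a b : ℕ) (hp₁ : p₁.Prime) (hp₂ : p₂.Prime)
    (ho₁ : Odd p₁) (ho₂ : Odd p₂) (hne : p₁ ≠ p₂) (ha : 0 < a) (hb : 0 < b) :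
    (tensorProd (SimpleGraph.completeMultipartiteGraph (fun _ : Fin p₁ => Fin a))
        (SimpleGraph.completeMultipartiteGraph (fun _ : Fin p₂ => Fin b))).Connected ∧
    (tensorProd (SimpleGraph.completeMultipartiteGraph (fun _ : Fin p₁ => Fin a))
        (SimpleGraph.completeMultipartiteGraph (fun _ : Fin p₂ => Fin b))).diam = 2 := by
  set G := tensorProd (SimpleGraph.completeMultipartiteGraph (fun _ : Fin p₁ => Fin a))
        (SimpleGraph.completeMultipartiteGraph (fun _ : Fin p₂ => Fin b)) with hG
  have h3₁ : 3 ≤ p₁ := by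
    have := hp₁.two_le; obtain ⟨k, hk⟩ := ho₁; omega
  have h3₂ : 3 ≤ p₂ := by
    have := hp₂.two_le; obtain ⟨k, hk⟩ := ho₂; omega
  have hadj : ∀ u v : (Σ _ : Fin p₁, Fin a) × (Σ _ : Fin p₂, Fin b),
      G.Adj u v ↔ u.1.1 ≠ v.1.1 ∧ u.2.1 ≠ v.2.1 := fun u v => Iff.rfl
  -- edist ≤ 2 everywhere
  have hle2 : ∀ u v, G.edist u v ≤ 2 := by
    intro u v
    rcases eq_or_ne u v with rfl | huv
    · simp [SimpleGraph.edist_self]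
    by_cases hadjuv : G.Adj u v
    · rw [← SimpleGraph.edist_eq_one_iff_adj] at hadjuv
      rw [hadjuv]; exact one_le_two
    · obtain ⟨i, hi1, hi2⟩ := fin_third h3₁ u.1.1 v.1.1
      obtain ⟨j, hj1, hj2⟩ := fin_third h3₂ u.2.1 v.2.1
      set w : (Σ _ : Fin p₁, Fin a) × (Σ _ : Fin p₂, Fin b) := (⟨i, u.1.2⟩, ⟨j, u.2.2⟩)
      have h1 : G.Adj u w := (hadj u w).mpr ⟨hi1.symm, hj1.symm⟩
      have h2 : G.Adj w v := (hadj w v).mpr ⟨hi2, hj2⟩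
      have := SimpleGraph.edist_le (SimpleGraph.Walk.cons h1 (SimpleGraph.Walk.cons h2 SimpleGraph.Walk.nil))
      simpa using this
  have hpre : G.Preconnected := by
    intro u v
    exact SimpleGraph.reachable_of_edist_ne_top (by
      intro h
      have := hle2 u v
      rw [h] at this
      simp at this)
  haveI : Nonempty ((Σ _ : Fin p₁, Fin a) × (Σ _ : Fin p₂, Fin b)) :=
    ⟨(⟨⟨0, by omega⟩, ⟨0, ha⟩⟩, ⟨⟨0, by omega⟩, ⟨0, hb⟩⟩)⟩
  refine ⟨⟨hpre⟩, ?_⟩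
  -- a pair at distance exactly 2
  set x0 : Fin a := ⟨0, ha⟩
  set y0 : Fin b := ⟨0, hb⟩
  set u : (Σ _ : Fin p₁, Fin a) × (Σ _ : Fin p₂, Fin b) := (⟨⟨0, by omega⟩, x0⟩, ⟨⟨0, by omega⟩, y0⟩)
  set v : (Σ _ : Fin p₁, Fin a) × (Σ _ : Fin p₂, Fin b) := (⟨⟨0, by omega⟩, x0⟩, ⟨⟨1, by omega⟩, y0⟩)
  have huv : u ≠ v := by
    intro h
    have h2 := congrArg (fun z => z.2.1.val) h
    simp [u, v] at h2
  have hnadj : ¬ G.Adj u v := by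
    rw [hadj]
    push_neg
    intro h
    exact absurd rfl h
  have h2le : 2 ≤ G.edist u v := by
    have h0 : G.edist u v ≠ 0 := (SimpleGraph.edist_pos_of_ne huv).ne'
    have h1 : G.edist u v ≠ 1 := fun h => hnadj (SimpleGraph.edist_eq_one_iff_adj.mp h)
    have hlt : G.edist u v ≠ ⊤ := by
      intro h
      have := hle2 u v
      rw [h] at this
      simp at this
    lift G.edist u v to ℕ using hlt with d hd
    have h0' : d ≠ 0 := by exact_mod_cast h0
    have h1' : d ≠ 1 := by exact_mod_cast h1
    exact_mod_cast (by omega : 2 ≤ d)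
  have hediam : G.ediam = 2 := by
    refine le_antisymm (SimpleGraph.ediam_le_of_edist_le hle2) ?_
    exact le_trans h2le SimpleGraph.edist_le_ediam
  rw [SimpleGraph.diam, hediam]
  rfl
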